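/- Let V be a finite-dimensional vector space over ℚ and let a group G act linearly on V. Let G_τ = {g ∈ G : g acts as the identity on V} be the kernel of the action. If G_τ is Jordan, then G is Jordan. -/

import Mathlib

/-- `G` is Jordan with constant `J`: every finite subgroup of `G` contains a
normal abelian subgroup of index at most `J`. -/
def JordanGroupWith (G : Type*) [Group G] (J : ℕ) : Prop :=
  ∀ H : Subgroup G, Finite H →
    ∃ A : Subgroup H, A.Normal ∧ (∀ x y : A, x * y = y * x) ∧ A.index ≤ J

/-- `G` is Jordan. -/
def JordanGroup (G : Type*) [Group G] : Prop := ∃ J : ℕ, JordanGroupWith G J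

/-- Every finite subgroup of `G` has order at most `B`. -/
def HasBoundedFiniteSubgroupsWith (G : Type*) [Group G] (B : ℕ) : Prop :=
  ∀ H : Subgroup G, Finite H → Nat.card H ≤ B

/-- `G` has bounded finite subgroups. -/
def HasBoundedFiniteSubgroups (G : Type*) [Group G] : Prop :=
  ∃ B : ℕ, HasBoundedFiniteSubgroupsWith G B


lemma descent {m : Type*} [Fintype m] [DecidableEq m] {p : ℕ} (hp : p.Prime)
    (A : Matrix m m ℤ) (hA : (1 + A) ^ p = 1) (h3 : ∀ i j, (3:ℤ) ∣ A i j) : A = 0 := by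
  have hp2 : 2 ≤ p := hp.two_le
  set S : Matrix m m ℤ := ∑ k ∈ Finset.range (p - 1), A ^ k * (p.choose (k + 2) : Matrix m m ℤ)
    with hS
  have hiden : A ^ 2 * S + p • A = 0 := by
    have e1 : (A + 1) ^ p
        = ∑ k ∈ Finset.range (p + 1), A ^ k * 1 ^ (p - k) * (p.choose k : Matrix m m ℤ) :=
      (Commute.one_right A).add_pow p
    rw [show A + 1 = 1 + A from add_comm A 1, hA] at e1
    simp only [one_pow, mul_one] at e1
    rw [show p + 1 = (p - 1) + 1 + 1 by omega, Finset.sum_range_succ', Finset.sum_range_succ']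
      at e1
    simp only [zero_add, pow_zero, pow_one, Nat.choose_zero_right, Nat.cast_one, mul_one,
      Nat.choose_one_right, one_mul] at e1
    have e2 : (∑ k ∈ Finset.range (p - 1), A ^ (k + 1 + 1) * (p.choose (k + 1 + 1) : Matrix m m ℤ))
        + A * (p : Matrix m m ℤ) = 0 := by
      have := e1.symm
      rwa [add_eq_right] at this
    have e3 : (∑ k ∈ Finset.range (p - 1), A ^ (k + 1 + 1) * (p.choose (k + 1 + 1) : Matrix m m ℤ))
        = A ^ 2 * S := by
      rw [hS, Finset.mul_sum]
      refine Finset.sum_congr rfl fun k _ => ?_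
      rw [show k + 1 + 1 = 2 + k by omega, pow_add, mul_assoc]
    have e4 : A * (p : Matrix m m ℤ) = p • A := (nsmul_eq_mul' A p).symm
    rw [e3, e4] at e2
    exact e2
  have key : ∀ r : ℕ, ∀ i j, (3:ℤ) ^ (r + 1) ∣ A i j := by
    intro r
    induction r with
    | zero => simpa using h3
    | succ r ih =>
      set q : ℤ := 3 ^ (r + 1) with hq
      have hqpos : (0:ℤ) < q := by positivity
      obtain ⟨B, hB⟩ : ∃ B : Matrix m m ℤ, A = q • B := by
        refine ⟨Matrix.of fun i j => A i j / q, ?_⟩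
        ext i j
        simp only [Matrix.smul_apply, Matrix.of_apply, smul_eq_mul]
        exact (Int.mul_ediv_cancel' (ih i j)).symm
      have h2 : A ^ 2 * S = (q * q) • (B * B * S) := by
        calc A ^ 2 * S = (q • B) * (q • B) * S := by rw [hB, pow_two]
        _ = (q * q) • (B * B * S) := by
            rw [smul_mul_assoc, mul_smul_comm, smul_smul, smul_mul_assoc]
      have hiden2 := hiden
      rw [h2, hB, ← Nat.cast_smul_eq_nsmul ℤ p (q • B), smul_smul] at hiden2
      intro i j
      have ent : q * q * ((B * B * S) i j) + (p:ℤ) * q * B i j = 0 := by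
        have h0 := congrArg (fun M : Matrix m m ℤ => M i j) hiden2
        simpa only [Matrix.add_apply, Matrix.smul_apply, smul_eq_mul, Matrix.zero_apply,
          nsmul_eq_mul] using h0
      have h3B : (3:ℤ) ∣ B i j := by
        by_cases hp3 : p = 3
        · subst hp3
          have hSval : S = (3 : Matrix m m ℤ) + A := by
            rw [hS]
            norm_num [Finset.sum_range_succ]
          have hBBS : (B * B * S) i j
              = 3 * ((B * B) i j) + q * ((B * B * B) i j) := by
            rw [hSval, hB]
            simp only [mul_add, Matrix.add_apply, mul_smul_comm, Matrix.smul_apply, smul_eq_mul]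
            congr 1
            have h31 : B * B * (3 : Matrix m m ℤ) = ((3:ℕ) • (B * B) : Matrix m m ℤ) := by
              rw [nsmul_eq_mul']; norm_num
            rw [h31]
            simp
          rw [hBBS] at ent
          push_cast at ent
          have hq3 : q * q * q = (3 * q) * 3 ^ (2*r+1) := by
            calc q*q*q = 3 ^ ((r+1)+(r+1)+(r+1)) := by rw [hq, ← pow_add, ← pow_add]
            _ = 3 ^ (1 + (r+1) + (2*r+1)) := by congr 1; omega
            _ = 3 * q * 3^(2*r+1) := by rw [pow_add, pow_add, pow_one, hq]
          have hkey : B i j = -(q * ((B*B) i j) + 3^(2*r+1) * ((B*B*B) i j)) := by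
            have h30 : (3:ℤ) * q ≠ 0 := by positivity
            apply mul_left_cancel₀ h30
            linear_combination ent - ((B*B*B) i j) * hq3
          rw [hkey]
          refine dvd_neg.mpr (dvd_add ?_ ?_)
          · exact ((dvd_pow_self (3:ℤ) (Nat.succ_ne_zero r)).mul_right _)
          · exact ((dvd_pow_self (3:ℤ) (by omega : 2*r+1 ≠ 0)).mul_right _)
        · have hfac : q * (q * ((B * B * S) i j) + (p:ℤ) * B i j) = 0 := by
            linear_combination ent
          have h0 := (mul_eq_zero.mp hfac).resolve_left hqpos.ne'
          have ent2 : (p:ℤ) * B i j = -(q * ((B * B * S) i j)) := by linarith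
          have hdvd : (3:ℤ) ∣ (p:ℤ) * B i j := by
            rw [ent2]
            exact dvd_neg.mpr ((dvd_pow_self (3:ℤ) (Nat.succ_ne_zero r)).mul_right _)
          have hcop : IsCoprime (3:ℤ) (p:ℤ) := by
            have : Nat.Coprime 3 p := (Nat.coprime_primes (by norm_num) hp).mpr (by omega)
            exact_mod_cast Nat.isCoprime_iff_coprime.mpr this
          exact hcop.dvd_of_dvd_mul_left hdvd
      obtain ⟨c, hc⟩ := h3B
      have : A i j = q * B i j := by rw [hB]; simp
      rw [this, hc, hq]
      exact ⟨c, by ring⟩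
  ext i j
  simp only [Matrix.zero_apply]
  refine Int.eq_zero_of_abs_lt_dvd (key (A i j).natAbs i j) ?_
  rw [Int.abs_eq_natAbs]
  have h1 : (A i j).natAbs < 3 ^ ((A i j).natAbs + 1) := by
    calc (A i j).natAbs < 3 ^ (A i j).natAbs := Nat.lt_pow_self (by norm_num)
    _ ≤ 3 ^ ((A i j).natAbs + 1) := Nat.pow_le_pow_right (by norm_num) (by omega)
  exact_mod_cast h1


lemma glq_bounded (V : Type*) [AddCommGroup V] [Module ℚ V] [FiniteDimensional ℚ V] :
    HasBoundedFiniteSubgroups (V ≃ₗ[ℚ] V) := by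
  classical
  set n := Module.finrank ℚ V with hn
  refine ⟨3 ^ (n * n), ?_⟩
  intro H hH
  have : Finite H := hH
  set b := Module.finBasis ℚ V with hb
  set S : Set V := Set.range (fun p : H × Fin n => (p.1 : V ≃ₗ[ℚ] V) (b p.2)) with hSdef
  have hSfin : S.Finite := Set.finite_range _
  set L : Submodule ℤ V := Submodule.span ℤ S with hL
  have hbL : ∀ i, b i ∈ L := fun i =>
    Submodule.subset_span ⟨(1, i), by simp⟩
  have hLfin : Module.Finite ℤ L := Module.Finite.span_of_finite ℤ hSfin
  have : IsAddTorsionFree V := IsAddTorsionFree.of_module_rat V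
  set ι := Module.Free.ChooseBasisIndex ℤ ↥L with hι
  set c : Module.Basis ι ℤ ↥L := Module.Free.chooseBasis ℤ ↥L with hc
  have hci : Fintype.card ι ≤ n := by
    have h1 : LinearIndependent ℤ (fun i : ι => ((c i : ↥L) : V)) :=
      c.linearIndependent.map' L.subtype L.ker_subtype
    have h2 : LinearIndependent ℚ (fun i : ι => ((c i : ↥L) : V)) :=
      (LinearIndependent.iff_fractionRing ℤ ℚ).mp h1
    exact h2.fintype_card_le_finrank
  have hmapL : ∀ g : H, ∀ x ∈ L, (g : V ≃ₗ[ℚ] V) x ∈ L := by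
    intro g x hx
    have hle : Submodule.map (((g : V ≃ₗ[ℚ] V) : V →ₗ[ℚ] V).restrictScalars ℤ) L ≤ L := by
      rw [hL, Submodule.map_span, Submodule.span_le]
      rintro _ ⟨_, ⟨⟨h, i⟩, rfl⟩, rfl⟩
      refine Submodule.subset_span ⟨(g * h, i), ?_⟩
      rfl
    exact hle ⟨x, hx, rfl⟩
  set T : H → (↥L →ₗ[ℤ] ↥L) := fun g =>
    ((((g : V ≃ₗ[ℚ] V) : V →ₗ[ℚ] V)).restrictScalars ℤ).restrict (hmapL g) with hT
  have hT1 : T 1 = LinearMap.id := by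
    ext x
    simp [hT, LinearMap.restrict_apply]
  have hTmul : ∀ g h : H, T (g * h) = (T g).comp (T h) := by
    intro g h
    ext x
    simp [hT, LinearMap.restrict_apply]
    rfl
  set M : H → Matrix ι ι ℤ := fun g => LinearMap.toMatrix c c (T g) with hM
  have hM1 : M 1 = 1 := by rw [hM]; simp only [hT1, LinearMap.toMatrix_id]
  have hMmul : ∀ g h, M (g * h) = M g * M h := by
    intro g h
    rw [hM]
    simp only [hTmul, LinearMap.toMatrix_comp c c c]
  set φ : Matrix ι ι ℤ →+* Matrix ι ι (ZMod 3) := (Int.castRingHom (ZMod 3)).mapMatrix with hφ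
  set Mb : H → Matrix ι ι (ZMod 3) := fun g => φ (M g) with hMb
  have hMb1 : Mb 1 = 1 := by rw [hMb]; simp [hM1]
  have hMbmul : ∀ g h, Mb (g * h) = Mb g * Mb h := by
    intro g h; rw [hMb]; simp [hMmul]
  have claim : ∀ k : H, Mb k = 1 → k = 1 := by
    intro k hk
    by_contra hk1
    have hordpos : 0 < orderOf k := orderOf_pos k
    set m := orderOf k with hm
    have hm1 : m ≠ 1 := by
      rw [hm]
      simpa [orderOf_eq_one_iff] using hk1
    set pp := m.minFac with hpp
    have hppp : pp.Prime := Nat.minFac_prime hm1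
    set k' := k ^ (m / pp) with hk'
    have hk'ord : orderOf k' = pp := by
      rw [hk', orderOf_pow]
      rw [← hm, Nat.gcd_eq_right (Nat.div_dvd_of_dvd (Nat.minFac_dvd m)),
        Nat.div_div_self (Nat.minFac_dvd m) (by omega)]
    have hpowM : ∀ (j : ℕ), M (k ^ j) = (M k) ^ j := by
      intro j
      induction j with
      | zero => simpa using hM1
      | succ j ih => rw [pow_succ, pow_succ, hMmul, ih]
    have hMbk' : Mb k' = 1 := by
      show φ (M k') = 1
      rw [hk', hpowM, map_pow]
      have hk2 : φ (M k) = 1 := hk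
      rw [hk2, one_pow]
    have hpowid : (M k') ^ pp = 1 := by
      rw [hk', hpowM, ← pow_mul, Nat.div_mul_cancel (Nat.minFac_dvd m), hm, ← hpowM,
        pow_orderOf_eq_one, hM1]
    have hdvd3 : ∀ i j, (3:ℤ) ∣ (M k' - 1) i j := by
      intro i j
      have hent := congrArg (fun X : Matrix ι ι (ZMod 3) => X i j) hMbk'
      simp only [hMb, hφ, RingHom.mapMatrix_apply, Matrix.map_apply, Int.coe_castRingHom] at hent
      have h0 : (((M k' - 1) i j : ℤ) : ZMod 3) = 0 := by
        rw [Matrix.sub_apply]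
        push_cast
        rw [hent]
        by_cases hij : i = j <;> simp [hij, Matrix.one_apply]
      exact_mod_cast (ZMod.intCast_zmod_eq_zero_iff_dvd _ 3).mp h0
    have hzero : M k' - 1 = 0 := by
      refine descent hppp (M k' - 1) ?_ hdvd3
      rw [add_sub_cancel]
      exact hpowid
    have hMk' : M k' = 1 := by
      have := sub_eq_zero.mp hzero
      exact this
    have hTk' : T k' = LinearMap.id := by
      apply (LinearMap.toMatrix c c).injective
      rw [LinearMap.toMatrix_id]
      exact hMk'
    have hk'V : (k' : V ≃ₗ[ℚ] V) = 1 := by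
      apply LinearEquiv.toLinearMap_injective
      apply b.ext
      intro i
      have hx := congrArg (fun f : ↥L →ₗ[ℤ] ↥L => ((f ⟨b i, hbL i⟩ : ↥L) : V)) hTk'
      have hx' : (k' : V ≃ₗ[ℚ] V) (b i) = b i := hx
      simpa [hT, LinearMap.restrict_apply] using hx'
    have : k' = 1 := by
      apply Subtype.ext
      exact hk'V
    rw [this, orderOf_one] at hk'ord
    exact hppp.one_lt.ne' hk'ord.symm
  have hinj : Function.Injective Mb := by
    intro g h hgh
    have h1 : Mb (g⁻¹ * h) = 1 := by
      rw [hMbmul, ← hgh, ← hMbmul, inv_mul_cancel, hMb1]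
    have := claim _ h1
    rw [inv_mul_eq_one] at this
    exact this
  calc Nat.card H ≤ Nat.card (Matrix ι ι (ZMod 3)) := Nat.card_le_card_of_injective Mb hinj
  _ = 3 ^ (Fintype.card ι * Fintype.card ι) := by
      rw [Nat.card_eq_fintype_card]
      show Fintype.card (ι → ι → ZMod 3) = _
      rw [Fintype.card_fun, Fintype.card_fun, ZMod.card, ← pow_mul]
  _ ≤ 3 ^ (n * n) := Nat.pow_le_pow_right (by norm_num)
      (Nat.mul_le_mul hci hci)



lemma pullback_aux {G G' : Type*} [Group G] [Group G'] (e : G ≃* G') (A' : Subgroup G')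
    (hn : A'.Normal) (hab : ∀ x y : A', x * y = y * x) :
    (A'.comap e.toMonoidHom).Normal ∧ (∀ x y : A'.comap e.toMonoidHom, x * y = y * x) ∧
      (A'.comap e.toMonoidHom).index = A'.index := by
  refine ⟨hn.comap _, ?_, Subgroup.index_comap_of_surjective _ e.surjective⟩
  intro x y
  have hx : e x.1 ∈ A' := x.2
  have hy : e y.1 ∈ A' := y.2
  have h := congrArg Subtype.val (hab ⟨e x.1, hx⟩ ⟨e y.1, hy⟩)
  simp only [Subgroup.coe_mul] at h
  apply Subtype.ext
  apply e.injective
  simpa only [Subgroup.coe_mul, map_mul] using h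

lemma jordan_of_hom {G G' : Type*} [Group G] [Group G'] (f : G →* G')
    (hker : JordanGroup f.ker) (hbdd : HasBoundedFiniteSubgroups G') : JordanGroup G := by
  classical
  obtain ⟨J, hJ⟩ := hker
  obtain ⟨B, hB⟩ := hbdd
  refine ⟨(J * B).factorial, ?_⟩
  intro H hH
  have : Finite H := hH
  set fH : ↥H →* G' := f.comp H.subtype with hfH
  set K : Subgroup ↥H := fH.ker with hKdef
  have hrangefin : Finite fH.range := Finite.of_surjective _ fH.rangeRestrict_surjective
  have hKidx : K.index ≤ B := by
    rw [hKdef, Subgroup.index_ker]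
    exact hB fH.range hrangefin
  have hle : K.map H.subtype ≤ f.ker := by
    rintro x ⟨y, hy, rfl⟩
    simpa [hKdef, hfH, MonoidHom.mem_ker] using hy
  set e : ↥K ≃* ↥((K.map H.subtype).subgroupOf f.ker) :=
    (K.equivMapOfInjective H.subtype H.subtype_injective).trans
      (Subgroup.subgroupOfEquivOfLe hle).symm with he
  have hfin2 : Finite ((K.map H.subtype).subgroupOf f.ker) := Finite.of_equiv _ e.toEquiv
  obtain ⟨A', hA'n, hA'ab, hA'idx⟩ := hJ _ hfin2
  obtain ⟨hAn, hAab, hAidx⟩ := pullback_aux e A' hA'n hA'ab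
  set A : Subgroup ↥K := A'.comap e.toMonoidHom with hA
  set Abar : Subgroup ↥H := A.map K.subtype with hAbar
  have hAbarK : Abar ≤ K := Subgroup.map_subtype_le A
  have habAbar : ∀ x y : Abar, x * y = y * x := by
    rintro ⟨_, a, ha, rfl⟩ ⟨_, b, hb, rfl⟩
    have h := congrArg Subtype.val (hAab ⟨a, ha⟩ ⟨b, hb⟩)
    apply Subtype.ext
    simpa using congrArg Subtype.val h
  have hAbaridx : Abar.index ≤ J * B := by
    have h1 : Abar.subgroupOf K = A :=
      Subgroup.comap_map_eq_self_of_injective K.subtype_injective A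
    calc Abar.index = Abar.relIndex K * K.index :=
          (Subgroup.relIndex_mul_index hAbarK).symm
    _ = A.index * K.index := by rw [Subgroup.relIndex, h1]
    _ ≤ J * B := Nat.mul_le_mul (hAidx ▸ hA'idx) hKidx
  refine ⟨Abar.normalCore, inferInstance, ?_, ?_⟩
  · intro x y
    have hx : x.1 ∈ Abar := Abar.normalCore_le x.2
    have hy : y.1 ∈ Abar := Abar.normalCore_le y.2
    have h := congrArg Subtype.val (habAbar ⟨x.1, hx⟩ ⟨y.1, hy⟩)
    apply Subtype.ext
    simpa using h
  · rw [Subgroup.normalCore_eq_ker, Subgroup.index_ker]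
    have hfinQ : Finite (↥H ⧸ Abar) := Quotient.finite _
    have := Fintype.ofFinite (↥H ⧸ Abar)
    calc Nat.card (MulAction.toPermHom ↥H (↥H ⧸ Abar)).range
        ≤ Nat.card (Equiv.Perm (↥H ⧸ Abar)) :=
          Nat.card_le_card_of_injective _ Subtype.val_injective
    _ = (Nat.card (↥H ⧸ Abar)).factorial := by
          rw [Nat.card_eq_fintype_card, Nat.card_eq_fintype_card, Fintype.card_perm]
    _ = Abar.index.factorial := rfl
    _ ≤ (J * B).factorial := Nat.factorial_le hAbaridx

theorem stmt_10 (G V : Type*) [Group G] [AddCommGroup V] [Module ℚ V]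
    [FiniteDimensional ℚ V] (ρ : G →* (V ≃ₗ[ℚ] V))
    (hker : JordanGroup ρ.ker) : JordanGroup G :=
  jordan_of_hom ρ hker (glq_bounded V)
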